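/- The map μ: ℂ² → su(2) given by μ(z₁,z₂) = φ'(|z₁|²+|z₂|²) · [[(|z₁|²-|z₂|²)/2, z̄₁z₂],[z₁z̄₂, -(|z₁|²-|z₂|²)/2]] (identified with i·su(2) via the standard pairing), where φ: ℝ^{>0} → ℝ is smooth with t ↦ φ(e^{2t}) strictly increasing and strictly convex, is never proper on ℂ²∖{0}. In particular there is no choice of φ for which lim_{t→0⁺} φ'(t)·t = ∞. -/

import Mathlib

/-- The `SU(2)`-moment map on `ℂ² ∖ {0}` associated to an invariant Kähler potential
`φ(‖z‖²)` (so that `t ↦ φ(e^{2t})` is strictly increasing and strictly convex) is never a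
proper map; in particular there is no choice of `φ` with `lim_{t→0⁺} φ'(t)·t = ∞`. -/
theorem stmt_2 (φ φ' : ℝ → ℝ)
    (hderiv : ∀ t > 0, HasDerivAt φ (φ' t) t)
    (hmono : StrictMono fun t : ℝ => φ (Real.exp (2 * t)))
    (hconv : StrictConvexOn ℝ Set.univ fun t : ℝ => φ (Real.exp (2 * t)))
    (μ : {p : ℂ × ℂ // p ≠ 0} → Matrix (Fin 2) (Fin 2) ℂ)
    (hμ : ∀ z : {p : ℂ × ℂ // p ≠ 0},
      μ z = φ' (‖z.1.1‖ ^ 2 + ‖z.1.2‖ ^ 2) •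
        !![(((‖z.1.1‖ ^ 2 - ‖z.1.2‖ ^ 2) / 2 : ℝ) : ℂ),
              (starRingEnd ℂ) z.1.1 * z.1.2;
            z.1.1 * (starRingEnd ℂ) z.1.2,
              -(((‖z.1.1‖ ^ 2 - ‖z.1.2‖ ^ 2) / 2 : ℝ) : ℂ)]) :
    ¬ IsProperMap μ ∧
      ¬ Filter.Tendsto (fun t : ℝ => φ' t * t) (nhdsWithin 0 (Set.Ioi 0)) Filter.atTop := by
  set g : ℝ → ℝ := fun t : ℝ => φ (Real.exp (2 * t)) with hg_def
  set D : ℝ → ℝ := fun t : ℝ => φ' (Real.exp (2 * t)) * (2 * Real.exp (2 * t)) with hD_def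
  have hg : ∀ t : ℝ, HasDerivAt g (D t) t := by
    intro t
    have h1 : HasDerivAt (fun t : ℝ => Real.exp (2 * t)) (Real.exp (2 * t) * 2) t := by
      have := (Real.hasDerivAt_exp (2 * t)).comp t ((hasDerivAt_id t).const_mul 2)
      rw [mul_one] at this; exact this
    have h2 := (hderiv (Real.exp (2 * t)) (Real.exp_pos _)).comp t h1
    have h3 : D t = φ' (Real.exp (2 * t)) * (Real.exp (2 * t) * 2) := by rw [hD_def]; ring
    rw [h3]; exact h2
  -- derivative bounds
  have hub : ∀ t : ℝ, t < 1 → D t ≤ D 1 := by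
    intro t ht
    have h1 : D t ≤ slope g t 1 :=
      hconv.convexOn.le_slope_of_hasDerivAt (Set.mem_univ t) (Set.mem_univ 1) ht (hg t)
    have h2 : slope g t 1 ≤ D 1 :=
      hconv.convexOn.slope_le_of_hasDerivAt (Set.mem_univ t) (Set.mem_univ 1) ht (hg 1)
    linarith
  have hlb : ∀ t : ℝ, 0 ≤ D t := by
    intro t
    have h1 : slope g (t - 1) t ≤ D t :=
      hconv.convexOn.slope_le_of_hasDerivAt (Set.mem_univ _) (Set.mem_univ t)
        (by linarith) (hg t)
    have h2 : 0 < slope g (t - 1) t := by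
      rw [slope_def_field]
      have : g (t - 1) < g t := hmono (show t - 1 < t by linarith)
      apply div_pos <;> linarith
    linarith
  set B : ℝ := D 1 with hB_def
  have hBnn : 0 ≤ B := hlb 1
  -- bound on φ' s * s for small s
  have hbound : ∀ s : ℝ, s ∈ Set.Ioc (0 : ℝ) 1 → φ' s * s ∈ Set.Icc (0 : ℝ) B := by
    intro s hs
    set t : ℝ := Real.log s / 2 with ht_def
    have hst : Real.exp (2 * t) = s := by
      rw [ht_def, show 2 * (Real.log s / 2) = Real.log s by ring]
      exact Real.exp_log hs.1
    have ht1 : t < 1 := by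
      have : Real.log s ≤ 0 := Real.log_nonpos hs.1.le hs.2
      rw [ht_def]; linarith
    have hDt : D t = φ' s * (2 * s) := by rw [hD_def]; simp [hst]
    have h1 : φ' s * (2 * s) ≤ B := hDt ▸ hub t ht1
    have h2 : 0 ≤ φ' s * (2 * s) := hDt ▸ hlb t
    constructor <;> nlinarith
  constructor
  · -- not proper
    intro hproper
    -- the compact target set
    set f : ℝ → Matrix (Fin 2) (Fin 2) ℂ :=
      fun c => (c : ℂ) • !![(1 : ℂ), 0; 0, -1] with hf_def
    have hfcont : Continuous f :=
      Complex.continuous_ofReal.smul continuous_const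
    have hK : IsCompact (f '' Set.Icc 0 B) := (isCompact_Icc).image hfcont
    have hKpre : IsCompact (μ ⁻¹' (f '' Set.Icc 0 B)) := hproper.isCompact_preimage hK
    -- the escaping sequence
    set r : ℕ → ℝ := fun n => ((n : ℝ) + 1)⁻¹ with hr_def
    have hr0 : ∀ n, 0 < r n := by intro n; rw [hr_def]; positivity
    have hr1 : ∀ n, r n ≤ 1 := by
      intro n
      rw [hr_def]
      have h1 : (1 : ℝ) ≤ (n : ℝ) + 1 := by
        have := Nat.cast_nonneg (α := ℝ) n; linarith
      simpa using inv_le_one_of_one_le₀ h1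
    have hne : ∀ n : ℕ, (((r n : ℝ) : ℂ), (0 : ℂ)) ≠ (0 : ℂ × ℂ) := by
      intro n h
      have h1 : ((r n : ℝ) : ℂ) = 0 := by simpa using congrArg Prod.fst h
      have h2 : r n = 0 := by exact_mod_cast h1
      exact absurd h2 (hr0 n).ne'
    set u : ℕ → {p : ℂ × ℂ // p ≠ 0} := fun n => ⟨(((r n : ℝ) : ℂ), 0), hne n⟩ with hu_def
    have hmem : ∀ n, u n ∈ μ ⁻¹' (f '' Set.Icc 0 B) := by
      intro n
      have habs : ‖((r n : ℝ) : ℂ)‖ = r n := by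
        rw [Complex.norm_real, Real.norm_of_nonneg (hr0 n).le]
      have hs : r n ^ 2 ∈ Set.Ioc (0 : ℝ) 1 := by
        constructor
        · positivity
        · nlinarith [hr0 n, hr1 n]
      have hc := hbound (r n ^ 2) hs
      simp only [Set.mem_preimage]
      refine ⟨φ' (r n ^ 2) * (r n ^ 2) / 2, ⟨?_, ?_⟩, ?_⟩
      · exact div_nonneg hc.1 (by norm_num)
      · linarith [hc.2]
      · rw [hμ (u n)]
        have e1 : (u n).1.1 = ((r n : ℝ) : ℂ) := rfl
        have e2 : (u n).1.2 = (0 : ℂ) := rfl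
        rw [hf_def]
        ext i j
        fin_cases i <;> fin_cases j <;>
          simp [e1, e2, habs, Matrix.smul_apply, Complex.real_smul] <;> ring
    obtain ⟨x, -, ψ, hψ, hlim⟩ := hKpre.tendsto_subseq hmem
    have hval : Filter.Tendsto (fun n => (u (ψ n)).val) Filter.atTop (nhds x.val) :=
      (continuous_subtype_val.continuousAt.tendsto).comp hlim
    have hzero : Filter.Tendsto (fun n => (u (ψ n)).val) Filter.atTop (nhds (0 : ℂ × ℂ)) := by
      have h0 : Filter.Tendsto r Filter.atTop (nhds 0) := by
        apply tendsto_one_div_add_atTop_nhds_zero_nat.congr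
        intro n; rw [hr_def, one_div]
      have h1 : Filter.Tendsto (fun n : ℕ => (((r n : ℝ) : ℂ), (0 : ℂ)))
          Filter.atTop (nhds (0, 0)) := by
        apply Filter.Tendsto.prodMk_nhds _ tendsto_const_nhds
        have := (Complex.continuous_ofReal.continuousAt.tendsto).comp h0
        exact this
      exact h1.comp hψ.tendsto_atTop
    have : x.val = 0 := tendsto_nhds_unique hval hzero
    exact x.2 this
  · -- not tendsto atTop
    intro h
    have h1 : ∀ᶠ t in nhdsWithin (0 : ℝ) (Set.Ioi 0), B + 1 ≤ φ' t * t :=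
      h.eventually (Filter.eventually_ge_atTop (B + 1))
    have h2 : Set.Ioc (0 : ℝ) 1 ∈ nhdsWithin (0 : ℝ) (Set.Ioi 0) :=
      Ioc_mem_nhdsGT_of_mem ⟨le_refl 0, one_pos⟩
    obtain ⟨t, ht1, ht2⟩ := (h1.and (Filter.eventually_of_mem h2 (fun x hx => hx))).exists
    have := (hbound t ht2).2
    linarith
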